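/- Assume that the cost per stage g is bounded over X×U×W and that there exists a uniformly proper policy. Then Ĵ is the largest solution of Bellman's equation within the set B: Ĵ ∈ B, Ĵ satisfies Bellman's equation, and if J̃ ∈ B is another function satisfying Bellman's equation, then J̃ ≤ Ĵ. -/

import Mathlib

open scoped ENNReal
open Filter
open scoped Classical NNReal

/-- A stochastic shortest path (SSP) problem with state space `X`, control space `U`,
countable disturbance space `W`, a cost-free absorbing termination state `t`,
nonempty control constraint sets `Uc x ⊆ U`, disturbance distributions `P x u`,
system function `f`, and nonnegative (finite-valued) cost per stage `g`. -/
structure SSP (X U W : Type*) [Countable W] where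
  t : X
  Uc : X → Set U
  Uc_nonempty : ∀ x, (Uc x).Nonempty
  P : X → U → PMF W
  f : X → U → W → X
  g : X → U → W → ℝ≥0∞
  g_lt_top : ∀ x u w, g x u w < ⊤
  f_absorb : ∀ u ∈ Uc t, ∀ w, f t u w = t
  g_zero : ∀ u ∈ Uc t, ∀ w, g t u w = 0

namespace SSP

variable {X U W : Type*} [Countable W] (S : SSP X U W)

/-- A policy `π = (μ₀, μ₁, …)` is admissible if `μ_k(x) ∈ U(x)` for all `k, x`. -/
def IsPolicy (π : ℕ → X → U) : Prop := ∀ k x, π k x ∈ S.Uc x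

/-- Distribution of the state `x_k` after `k` steps under policy `π` starting from `x₀`. -/
noncomputable def stateDist (π : ℕ → X → U) (x₀ : X) : ℕ → PMF X
  | 0 => PMF.pure x₀
  | k + 1 => (stateDist π x₀ k).bind fun x => (S.P x (π k x)).map (S.f x (π k x))

/-- Expected value `E^π_{x₀}[J(x_k)]` of a nonnegative function along the trajectory. -/
noncomputable def expect (π : ℕ → X → U) (x₀ : X) (k : ℕ) (J : X → ℝ≥0∞) : ℝ≥0∞ :=
  ∑' x, S.stateDist π x₀ k x * J x

/-- Expected cost `E^π_{x₀}[g(x_k, μ_k(x_k), w_k)]` of the `k`-th stage. -/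
noncomputable def stageCost (π : ℕ → X → U) (x₀ : X) (k : ℕ) : ℝ≥0∞ :=
  S.expect π x₀ k fun x => ∑' w, S.P x (π k x) w * S.g x (π k x) w

/-- The cost `J_π(x₀) = Σ_{k≥0} E^π_{x₀}[g(x_k, μ_k(x_k), w_k)]` of a policy. -/
noncomputable def Jcost (π : ℕ → X → U) (x₀ : X) : ℝ≥0∞ :=
  ∑' k, S.stageCost π x₀ k

/-- `r_k(π, x₀)`: probability that `x_k ≠ t` under `π` starting from `x₀`. -/
noncomputable def r (π : ℕ → X → U) (x₀ : X) (k : ℕ) : ℝ≥0∞ :=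
  S.expect π x₀ k fun x => if x = S.t then 0 else 1

/-- `Σ_{k≥0} r_k(π,x₀)`: expected number of steps to reach the destination. -/
noncomputable def N (π : ℕ → X → U) (x₀ : X) : ℝ≥0∞ := ∑' k, S.r π x₀ k

/-- A policy is proper at `x` if it is admissible, `J_π(x) < ∞` and `Σ_k r_k(π,x) < ∞`. -/
def ProperAt (π : ℕ → X → U) (x : X) : Prop :=
  S.IsPolicy π ∧ S.Jcost π x < ⊤ ∧ S.N π x < ⊤

/-- The optimal cost function `J*`. -/
noncomputable def Jstar (x : X) : ℝ≥0∞ := ⨅ π ∈ {π | S.IsPolicy π}, S.Jcost π x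

/-- The restricted optimal cost function `Ĵ` over policies proper at `x`
(infimum over the empty set is `∞`). -/
noncomputable def Jhat (x : X) : ℝ≥0∞ := ⨅ π ∈ {π | S.ProperAt π x}, S.Jcost π x

/-- The effective domain `X̂ = {x | Ĵ(x) < ∞}` of `Ĵ`. -/
def Xhat : Set X := {x | S.Jhat x < ⊤}

/-- Expected `k`-th stage cost in the `δ`-perturbed problem (stage cost `g + δ` off `t`). -/
noncomputable def stageCostPert (δ : ℝ≥0∞) (π : ℕ → X → U) (x₀ : X) (k : ℕ) : ℝ≥0∞ :=
  S.expect π x₀ k fun x =>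
    ∑' w, S.P x (π k x) w * (S.g x (π k x) w + if x = S.t then 0 else δ)

/-- The cost `J_{π,δ}` of a policy in the `δ`-perturbed problem. -/
noncomputable def Jpert (δ : ℝ≥0∞) (π : ℕ → X → U) (x₀ : X) : ℝ≥0∞ :=
  ∑' k, S.stageCostPert δ π x₀ k

/-- The optimal cost function `Ĵ_δ` of the `δ`-perturbed problem. -/
noncomputable def JhatPert (δ : ℝ≥0∞) (x : X) : ℝ≥0∞ :=
  ⨅ π ∈ {π | S.IsPolicy π}, S.Jpert δ π x

/-- `Q J x u = E_{w∼P(·|x,u)}[g(x,u,w) + J(f(x,u,w))]`. -/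
noncomputable def Q (J : X → ℝ≥0∞) (x : X) (u : U) : ℝ≥0∞ :=
  ∑' w, S.P x u w * (S.g x u w + J (S.f x u w))

/-- The Bellman operator `(TJ)(x) = inf_{u ∈ U(x)} E[g(x,u,w) + J(f(x,u,w))]`. -/
noncomputable def bellman (J : X → ℝ≥0∞) (x : X) : ℝ≥0∞ := ⨅ u ∈ S.Uc x, S.Q J x u

/-- The tail policy `π_k = (μ_k, μ_{k+1}, …)`. -/
def tail (π : ℕ → X → U) (k : ℕ) : ℕ → X → U := fun m => π (k + m)

/-- The set `Ŵ` of functions `J` with `J(t) = 0`, `Ĵ ≤ J`, and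
`E^π_{x₀}[J(x_k)] → 0` for every pair `(π, x₀)` with `π` proper at `x₀`. -/
def What : Set (X → ℝ≥0∞) :=
  {J | J S.t = 0 ∧ S.Jhat ≤ J ∧
    ∀ π x₀, S.ProperAt π x₀ → Tendsto (fun k => S.expect π x₀ k J) atTop (nhds 0)}

/-- The set `B` of functions `J` with `J(t) = 0` that are bounded over `X̂`. -/
def Bset : Set (X → ℝ≥0∞) :=
  {J | J S.t = 0 ∧ (⨆ x ∈ S.Xhat, J x) < ⊤}

/-- A policy is uniformly proper if it is admissible and the expected number of steps
to reach the destination is uniformly bounded over `X̂`. -/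
def UniformlyProper (π : ℕ → X → U) : Prop :=
  S.IsPolicy π ∧ (⨆ x ∈ S.Xhat, S.N π x) < ⊤

/-- The cost per stage `g` is (uniformly) bounded over `X × U × W`. -/
def BoundedCost : Prop := ∃ b : ℝ≥0∞, b < ⊤ ∧ ∀ x u w, S.g x u w ≤ b

end SSP

namespace SSP

variable {X U W : Type*} [Countable W] (S : SSP X U W)

lemma tsum_pure {α : Type*} (x : α) (J : α → ℝ≥0∞) :
    ∑' z, (PMF.pure x) z * J z = J x := by
  rw [tsum_eq_single x]
  · simp [PMF.pure_apply]
  · intro z hz; simp [PMF.pure_apply, hz]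

lemma tsum_map {α β : Type*} (p : PMF α) (f : α → β) (J : β → ℝ≥0∞) :
    ∑' y, (p.map f) y * J y = ∑' a, p a * J (f a) := by
  have h : ∀ y, (p.map f) y * J y = ∑' a, (if y = f a then p a else 0) * J y := by
    intro y; rw [PMF.map_apply, ← ENNReal.tsum_mul_right]
  rw [tsum_congr h, ENNReal.tsum_comm]
  refine tsum_congr fun a => ?_
  rw [tsum_eq_single (f a)]
  · simp
  · intro y hy; simp [hy]

lemma tsum_bind {α β : Type*} (p : PMF α) (q : α → PMF β) (J : β → ℝ≥0∞) :
    ∑' y, (p.bind q) y * J y = ∑' a, p a * ∑' y, (q a) y * J y := by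
  have h : ∀ y, (p.bind q) y * J y = ∑' a, p a * ((q a) y * J y) := by
    intro y; rw [PMF.bind_apply, ← ENNReal.tsum_mul_right]
    exact tsum_congr fun a => (mul_assoc _ _ _)
  rw [tsum_congr h, ENNReal.tsum_comm]
  exact tsum_congr fun a => ENNReal.tsum_mul_left

lemma stateDist_zero (π : ℕ → X → U) (x : X) : S.stateDist π x 0 = PMF.pure x := rfl

lemma stateDist_succ (π : ℕ → X → U) (x : X) (k : ℕ) :
    S.stateDist π x (k + 1)
      = (S.stateDist π x k).bind fun z => (S.P z (π k z)).map (S.f z (π k z)) := rfl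

lemma expect_def (π : ℕ → X → U) (x : X) (k : ℕ) (J : X → ℝ≥0∞) :
    S.expect π x k J = ∑' z, S.stateDist π x k z * J z := rfl

lemma expect_zero (π : ℕ → X → U) (x : X) (J : X → ℝ≥0∞) :
    S.expect π x 0 J = J x := tsum_pure x J

lemma expect_succ (π : ℕ → X → U) (x : X) (k : ℕ) (J : X → ℝ≥0∞) :
    S.expect π x (k + 1) J
      = ∑' z, S.stateDist π x k z * ∑' w, S.P z (π k z) w * J (S.f z (π k z) w) := by
  rw [expect_def, stateDist_succ, tsum_bind]
  exact tsum_congr fun z => by rw [tsum_map]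

lemma tail_one_eq (π : ℕ → X → U) (k : ℕ) : SSP.tail π 1 k = π (k + 1) := by
  show π (1 + k) = π (k + 1); rw [Nat.add_comm]

lemma stateDist_front (π : ℕ → X → U) (x : X) :
    ∀ k, S.stateDist π x (k + 1)
      = ((S.P x (π 0 x)).map (S.f x (π 0 x))).bind fun y => S.stateDist (SSP.tail π 1) y k
  | 0 => by
    rw [stateDist_succ, stateDist_zero, PMF.pure_bind]
    simp only [stateDist_zero]
    exact (PMF.bind_pure _).symm
  | (k + 1) => by
    rw [stateDist_succ, stateDist_front π x k, PMF.bind_bind]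
    congr 1
    funext y
    rw [stateDist_succ, tail_one_eq]

lemma expect_front (π : ℕ → X → U) (x : X) (k : ℕ) (J : X → ℝ≥0∞) :
    S.expect π x (k + 1) J
      = ∑' w, S.P x (π 0 x) w * S.expect (SSP.tail π 1) (S.f x (π 0 x) w) k J := by
  simp only [expect_def]
  rw [stateDist_front, tsum_bind, tsum_map]

lemma tsum_front (H : (X → U) → X → ℝ≥0∞) (π : ℕ → X → U) (x : X) :
    ∑' k, S.expect π x k (H (π k))
      = S.expect π x 0 (H (π 0))
        + ∑' w, S.P x (π 0 x) w
            * ∑' k, S.expect (SSP.tail π 1) (S.f x (π 0 x) w) k (H (SSP.tail π 1 k)) := by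
  rw [tsum_eq_zero_add' ENNReal.summable]
  congr 1
  have h1 : ∀ k : ℕ, S.expect π x (k + 1) (H (π (k + 1)))
      = ∑' w, S.P x (π 0 x) w
          * S.expect (SSP.tail π 1) (S.f x (π 0 x) w) k (H (SSP.tail π 1 k)) := by
    intro k
    rw [expect_front, tail_one_eq]
  rw [tsum_congr h1, ENNReal.tsum_comm]
  exact tsum_congr fun w => ENNReal.tsum_mul_left

lemma Jcost_front (π : ℕ → X → U) (x : X) :
    S.Jcost π x = S.stageCost π x 0
      + ∑' w, S.P x (π 0 x) w * S.Jcost (SSP.tail π 1) (S.f x (π 0 x) w) :=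
  S.tsum_front (fun μ z => ∑' w, S.P z (μ z) w * S.g z (μ z) w) π x

lemma N_front (π : ℕ → X → U) (x : X) :
    S.N π x = S.r π x 0
      + ∑' w, S.P x (π 0 x) w * S.N (SSP.tail π 1) (S.f x (π 0 x) w) :=
  S.tsum_front (fun _ z => if z = S.t then 0 else 1) π x

lemma Jpert_front (δ : ℝ≥0∞) (π : ℕ → X → U) (x : X) :
    S.Jpert δ π x = S.stageCostPert δ π x 0
      + ∑' w, S.P x (π 0 x) w * S.Jpert δ (SSP.tail π 1) (S.f x (π 0 x) w) :=
  S.tsum_front (fun μ z => ∑' w, S.P z (μ z) w * (S.g z (μ z) w + if z = S.t then 0 else δ)) π x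

end SSP
namespace SSP

variable {X U W : Type*} [Countable W] (S : SSP X U W)

lemma expect_congr (π : ℕ → X → U) (x : X) (k : ℕ) {A B : X → ℝ≥0∞}
    (h : ∀ z, A z = B z) : S.expect π x k A = S.expect π x k B := by
  simp only [expect_def]; exact tsum_congr fun z => by rw [h z]

lemma expect_mono (π : ℕ → X → U) (x : X) (k : ℕ) {A B : X → ℝ≥0∞}
    (h : ∀ z, A z ≤ B z) : S.expect π x k A ≤ S.expect π x k B :=
  Summable.tsum_le_tsum (fun z => mul_le_mul_right (h z) _) ENNReal.summable ENNReal.summable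

lemma expect_add (π : ℕ → X → U) (x : X) (k : ℕ) (A B : X → ℝ≥0∞) :
    S.expect π x k (fun z => A z + B z) = S.expect π x k A + S.expect π x k B := by
  simp only [expect_def, mul_add]; exact ENNReal.tsum_add

lemma expect_const_mul (π : ℕ → X → U) (x : X) (k : ℕ) (c : ℝ≥0∞) (A : X → ℝ≥0∞) :
    S.expect π x k (fun z => c * A z) = c * S.expect π x k A := by
  simp only [expect_def]
  rw [← ENNReal.tsum_mul_left]
  exact tsum_congr fun z => by ring

lemma stageCost_zero (π : ℕ → X → U) (x : X) :
    S.stageCost π x 0 = ∑' w, S.P x (π 0 x) w * S.g x (π 0 x) w :=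
  S.expect_zero π x _

lemma stageCostPert_zero (δ : ℝ≥0∞) (π : ℕ → X → U) (x : X) :
    S.stageCostPert δ π x 0
      = ∑' w, S.P x (π 0 x) w * (S.g x (π 0 x) w + if x = S.t then 0 else δ) :=
  S.expect_zero π x _

lemma r_zero (π : ℕ → X → U) (x : X) :
    S.r π x 0 = if x = S.t then 0 else 1 :=
  S.expect_zero π x _

lemma stageCostPert_eq (δ : ℝ≥0∞) (π : ℕ → X → U) (x : X) (k : ℕ) :
    S.stageCostPert δ π x k = S.stageCost π x k + δ * S.r π x k := by
  have h : ∀ z, (∑' w, S.P z (π k z) w * (S.g z (π k z) w + if z = S.t then 0 else δ))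
      = (∑' w, S.P z (π k z) w * S.g z (π k z) w) + δ * (if z = S.t then 0 else 1) := by
    intro z
    have h1 : ∀ w, S.P z (π k z) w * (S.g z (π k z) w + if z = S.t then 0 else δ)
        = S.P z (π k z) w * S.g z (π k z) w
          + S.P z (π k z) w * (if z = S.t then 0 else δ) := fun w => mul_add _ _ _
    rw [tsum_congr h1, ENNReal.tsum_add, ENNReal.tsum_mul_right, PMF.tsum_coe, one_mul]
    congr 1
    by_cases hz : z = S.t <;> simp [hz]
  have h2 : S.stageCostPert δ π x k
      = S.expect π x k (fun z => (∑' w, S.P z (π k z) w * S.g z (π k z) w)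
          + δ * (if z = S.t then 0 else 1)) := S.expect_congr π x k h
  rw [h2, expect_add, expect_const_mul]
  rfl

lemma Jpert_eq (δ : ℝ≥0∞) (π : ℕ → X → U) (x : X) :
    S.Jpert δ π x = S.Jcost π x + δ * S.N π x := by
  show ∑' k, S.stageCostPert δ π x k = _
  rw [tsum_congr (fun k => S.stageCostPert_eq δ π x k), ENNReal.tsum_add,
    ENNReal.tsum_mul_left]
  rfl

lemma Jpert_zero (π : ℕ → X → U) (x : X) : S.Jpert 0 π x = S.Jcost π x := by
  rw [Jpert_eq, zero_mul, add_zero]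

/-- The perturbed `Q`-factor. -/
noncomputable def Qd (δ : ℝ≥0∞) (J : X → ℝ≥0∞) (x : X) (u : U) : ℝ≥0∞ :=
  ∑' w, S.P x u w * ((S.g x u w + if x = S.t then 0 else δ) + J (S.f x u w))

lemma Qd_zero (J : X → ℝ≥0∞) (x : X) (u : U) : S.Qd 0 J x u = S.Q J x u := by
  show (∑' w, S.P x u w * ((S.g x u w + if x = S.t then 0 else 0) + J (S.f x u w))) = _
  simp [Q]

lemma Qd_split (δ : ℝ≥0∞) (J : X → ℝ≥0∞) (x : X) (u : U) :
    S.Qd δ J x u = (∑' w, S.P x u w * (S.g x u w + if x = S.t then 0 else δ))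
      + ∑' w, S.P x u w * J (S.f x u w) := by
  rw [Qd, ← ENNReal.tsum_add]
  exact tsum_congr fun w => mul_add _ _ _

lemma expect_Qd_step (δ : ℝ≥0∞) (π : ℕ → X → U) (x : X) (k : ℕ) (J : X → ℝ≥0∞) :
    ∑' z, S.stateDist π x k z * S.Qd δ J z (π k z)
      = S.stageCostPert δ π x k + S.expect π x (k + 1) J := by
  have h : ∀ z, S.stateDist π x k z * S.Qd δ J z (π k z)
      = S.stateDist π x k z
          * (∑' w, S.P z (π k z) w * (S.g z (π k z) w + if z = S.t then 0 else δ))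
        + S.stateDist π x k z * ∑' w, S.P z (π k z) w * J (S.f z (π k z) w) := by
    intro z; rw [Qd_split, mul_add]
  rw [tsum_congr h, ENNReal.tsum_add, expect_succ]
  rfl

lemma aux_fin {a b c : ℝ≥0∞} (ha : a ≠ 0) (h : a * b ≤ c) (hc : c < ⊤) : b < ⊤ := by
  by_contra hb
  rw [not_lt, top_le_iff] at hb
  rw [hb, ENNReal.mul_top ha] at h
  exact absurd (lt_of_le_of_lt h hc) (lt_irrefl ⊤)

lemma isPolicy_tail {π : ℕ → X → U} (hπ : S.IsPolicy π) : S.IsPolicy (SSP.tail π 1) :=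
  fun k z => hπ (1 + k) z

lemma properAt_tail {π : ℕ → X → U} {x : X} (hp : S.ProperAt π x) {w : W}
    (hw : S.P x (π 0 x) w ≠ 0) :
    S.ProperAt (SSP.tail π 1) (S.f x (π 0 x) w) := by
  obtain ⟨hpol, hJ, hN⟩ := hp
  refine ⟨S.isPolicy_tail hpol, ?_, ?_⟩
  · refine aux_fin hw ?_ hJ
    rw [S.Jcost_front π x]
    exact le_trans (ENNReal.le_tsum w) le_add_self
  · refine aux_fin hw ?_ hN
    rw [S.N_front π x]
    exact le_trans (ENNReal.le_tsum w) le_add_self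

/-- Restricted optimal cost of the `δ`-perturbed problem. -/
noncomputable def Jd (δ : ℝ≥0∞) (x : X) : ℝ≥0∞ := ⨅ π ∈ {π | S.ProperAt π x}, S.Jpert δ π x

lemma Jd_zero : S.Jd 0 = S.Jhat := by
  funext x
  exact iInf_congr fun π => iInf_congr fun _ => S.Jpert_zero π x

lemma Jd_le_Jpert (δ : ℝ≥0∞) {π : ℕ → X → U} {x : X} (hπ : S.ProperAt π x) :
    S.Jd δ x ≤ S.Jpert δ π x := iInf₂_le π hπ

lemma Jhat_le_Jcost {π : ℕ → X → U} {x : X} (hπ : S.ProperAt π x) :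
    S.Jhat x ≤ S.Jcost π x := iInf₂_le π hπ

lemma Jhat_le_Jd (δ : ℝ≥0∞) (x : X) : S.Jhat x ≤ S.Jd δ x := by
  refine le_iInf₂ fun π hπ => ?_
  refine le_trans (S.Jhat_le_Jcost hπ) ?_
  rw [Jpert_eq]; exact self_le_add_right _ _

lemma Jd_mono {δ δ' : ℝ≥0∞} (h : δ ≤ δ') (x : X) : S.Jd δ x ≤ S.Jd δ' x := by
  refine le_iInf₂ fun π hπ => ?_
  refine le_trans (S.Jd_le_Jpert δ hπ) ?_
  rw [Jpert_eq, Jpert_eq]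
  exact add_le_add_right (mul_le_mul_left h _) _

lemma Qd_le_Jpert (δ : ℝ≥0∞) {π : ℕ → X → U} {x : X} (hp : S.ProperAt π x) :
    S.Qd δ (S.Jd δ) x (π 0 x) ≤ S.Jpert δ π x := by
  rw [S.Jpert_front δ π x, S.stageCostPert_zero δ π x, Qd_split]
  refine add_le_add_right ?_ _
  refine Summable.tsum_le_tsum (fun w => ?_) ENNReal.summable ENNReal.summable
  by_cases hw : S.P x (π 0 x) w = 0
  · rw [hw, zero_mul, zero_mul]
  · exact mul_le_mul_right (S.Jd_le_Jpert δ (S.properAt_tail hp hw)) _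

lemma bellmand_le_Jd (δ : ℝ≥0∞) (x : X) :
    ⨅ u ∈ S.Uc x, S.Qd δ (S.Jd δ) x u ≤ S.Jd δ x := by
  refine le_iInf₂ fun π hπ => ?_
  exact le_trans (iInf₂_le (π 0 x) (hπ.1 0 x)) (S.Qd_le_Jpert δ hπ)

lemma bellman_le_Jhat (x : X) : S.bellman S.Jhat x ≤ S.Jhat x := by
  have h := S.bellmand_le_Jd 0 x
  rw [Jd_zero] at h
  refine le_trans ?_ h
  exact le_iInf₂ fun u hu => le_trans (iInf₂_le u hu) (by rw [Qd_zero])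

end SSP
namespace SSP

variable {X U W : Type*} [Countable W] (S : SSP X U W)

lemma stageCost_le_r {b : ℝ≥0∞} (hbg : ∀ x u w, S.g x u w ≤ b)
    {π : ℕ → X → U} (hπ : S.IsPolicy π) (x : X) (k : ℕ) :
    S.stageCost π x k ≤ b * S.r π x k := by
  rw [show b * S.r π x k
      = S.expect π x k (fun z => b * (if z = S.t then 0 else 1)) from
        (S.expect_const_mul π x k b _).symm]
  refine S.expect_mono π x k fun z => ?_
  by_cases hz : z = S.t
  · subst hz
    have h0 : ∀ w, S.P S.t (π k S.t) w * S.g S.t (π k S.t) w = 0 := by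
      intro w; rw [S.g_zero _ (hπ k S.t) w, mul_zero]
    rw [tsum_congr h0]
    simp
  · rw [if_neg hz, mul_one]
    calc ∑' w, S.P z (π k z) w * S.g z (π k z) w
        ≤ ∑' w, S.P z (π k z) w * b :=
          Summable.tsum_le_tsum (fun w => mul_le_mul_right (hbg z _ w) _)
            ENNReal.summable ENNReal.summable
      _ = b := by rw [ENNReal.tsum_mul_right, PMF.tsum_coe, one_mul]

lemma Jcost_le_N {b : ℝ≥0∞} (hbg : ∀ x u w, S.g x u w ≤ b)
    {π : ℕ → X → U} (hπ : S.IsPolicy π) (x : X) :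
    S.Jcost π x ≤ b * S.N π x := by
  show ∑' k, S.stageCost π x k ≤ _
  rw [show b * S.N π x = ∑' k, b * S.r π x k from ENNReal.tsum_mul_left.symm]
  exact Summable.tsum_le_tsum (fun k => S.stageCost_le_r hbg hπ x k)
    ENNReal.summable ENNReal.summable

lemma expect_t {π : ℕ → X → U} (hπ : S.IsPolicy π) (J : X → ℝ≥0∞) :
    ∀ k, S.expect π S.t k J = J S.t := by
  intro k
  induction k generalizing π with
  | zero => exact S.expect_zero π S.t J
  | succ k ih =>
    rw [expect_front]
    have h : ∀ w, S.P S.t (π 0 S.t) w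
        * S.expect (SSP.tail π 1) (S.f S.t (π 0 S.t) w) k J
        = S.P S.t (π 0 S.t) w * J S.t := by
      intro w
      rw [S.f_absorb _ (hπ 0 S.t) w, ih (S.isPolicy_tail hπ)]
    rw [tsum_congr h, ENNReal.tsum_mul_right, PMF.tsum_coe, one_mul]

lemma properAt_t {π : ℕ → X → U} (hπ : S.IsPolicy π) : S.ProperAt π S.t := by
  have hr : ∀ k, S.r π S.t k = 0 := by
    intro k; rw [show S.r π S.t k = (if S.t = S.t then 0 else 1) from S.expect_t hπ _ k]
    simp
  have hsc : ∀ k, S.stageCost π S.t k = 0 := by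
    intro k
    rw [show S.stageCost π S.t k
        = ∑' w, S.P S.t (π k S.t) w * S.g S.t (π k S.t) w from S.expect_t hπ _ k]
    have : ∀ w, S.P S.t (π k S.t) w * S.g S.t (π k S.t) w = 0 := by
      intro w; rw [S.g_zero _ (hπ k S.t) w, mul_zero]
    simp [tsum_congr this]
  refine ⟨hπ, ?_, ?_⟩
  · show (∑' k, S.stageCost π S.t k) < ⊤
    simp [tsum_congr hsc]
  · show (∑' k, S.r π S.t k) < ⊤
    simp [tsum_congr hr]

lemma Jcost_t {π : ℕ → X → U} (hπ : S.IsPolicy π) : S.Jcost π S.t = 0 := by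
  have hsc : ∀ k, S.stageCost π S.t k = 0 := by
    intro k
    rw [show S.stageCost π S.t k
        = ∑' w, S.P S.t (π k S.t) w * S.g S.t (π k S.t) w from S.expect_t hπ _ k]
    have : ∀ w, S.P S.t (π k S.t) w * S.g S.t (π k S.t) w = 0 := by
      intro w; rw [S.g_zero _ (hπ k S.t) w, mul_zero]
    simp [tsum_congr this]
  show (∑' k, S.stageCost π S.t k) = 0
  simp [tsum_congr hsc]

lemma Jhat_t {π : ℕ → X → U} (hπ : S.IsPolicy π) : S.Jhat S.t = 0 :=
  le_antisymm (le_trans (S.Jhat_le_Jcost (S.properAt_t hπ)) (S.Jcost_t hπ).le) zero_le'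

lemma t_mem_Xhat {π : ℕ → X → U} (hπ : S.IsPolicy π) : S.t ∈ S.Xhat := by
  show S.Jhat S.t < ⊤
  rw [S.Jhat_t hπ]; exact ENNReal.zero_lt_top

lemma reachable_Xhat : ∀ (n : ℕ) (π : ℕ → X → U) (x : X), S.ProperAt π x →
    ∀ z, S.stateDist π x n z ≠ 0 → S.Jhat z < ⊤ := by
  intro n
  induction n with
  | zero =>
    intro π x hp z hz
    rw [stateDist_zero, PMF.pure_apply] at hz
    have : z = x := by by_contra h; simp [h] at hz
    subst this
    exact lt_of_le_of_lt (S.Jhat_le_Jcost hp) hp.2.1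
  | succ n ih =>
    intro π x hp z hz
    rw [S.stateDist_front π x n, PMF.bind_apply] at hz
    obtain ⟨y, hy⟩ : ∃ y, ((S.P x (π 0 x)).map (S.f x (π 0 x))) y
        * S.stateDist (SSP.tail π 1) y n z ≠ 0 := by
      by_contra h
      push_neg at h
      exact hz (ENNReal.tsum_eq_zero.mpr h)
    have hy1 : ((S.P x (π 0 x)).map (S.f x (π 0 x))) y ≠ 0 :=
      fun h => hy (by rw [h, zero_mul])
    have hy2 : S.stateDist (SSP.tail π 1) y n z ≠ 0 :=
      fun h => hy (by rw [h, mul_zero])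
    rw [PMF.map_apply] at hy1
    obtain ⟨w, hw⟩ : ∃ w, (if y = S.f x (π 0 x) w then S.P x (π 0 x) w else 0) ≠ 0 := by
      by_contra h
      push_neg at h
      exact hy1 (ENNReal.tsum_eq_zero.mpr h)
    have hyw : y = S.f x (π 0 x) w := by
      by_contra h; simp [h] at hw
    rw [if_pos hyw] at hw
    subst hyw
    exact ih (SSP.tail π 1) _ (S.properAt_tail hp hw) z hy2

lemma expect_le_r {J : X → ℝ≥0∞} (hJt : J S.t = 0) {M : ℝ≥0∞}
    (hM : ∀ z ∈ S.Xhat, J z ≤ M) {π : ℕ → X → U} {x : X} (hp : S.ProperAt π x) (n : ℕ) :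
    S.expect π x n J ≤ M * S.r π x n := by
  rw [show M * S.r π x n
      = S.expect π x n (fun z => M * (if z = S.t then 0 else 1)) from
        (S.expect_const_mul π x n M _).symm]
  simp only [expect_def]
  refine Summable.tsum_le_tsum (fun z => ?_) ENNReal.summable ENNReal.summable
  by_cases hz : S.stateDist π x n z = 0
  · rw [hz, zero_mul, zero_mul]
  by_cases hzt : z = S.t
  · subst hzt; rw [hJt, mul_zero]; exact zero_le'
  · rw [if_neg hzt, mul_one]
    have hzX : z ∈ S.Xhat := S.reachable_Xhat n π x hp z hz
    exact mul_le_mul_right (hM z hzX) _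

lemma r_iInf_zero {π : ℕ → X → U} {x : X} (hp : S.ProperAt π x) :
    ⨅ n, S.r π x n = 0 := by
  by_contra h
  have hN : S.N π x = ⊤ := by
    show (∑' k, S.r π x k) = ⊤
    have hc : ∀ k, (⨅ n, S.r π x n) ≤ S.r π x k := fun k => iInf_le _ k
    refine top_le_iff.mp ?_
    calc (⊤ : ℝ≥0∞) = ∑' _ : ℕ, ⨅ n, S.r π x n :=
          (ENNReal.tsum_const_eq_top_of_ne_zero h).symm
      _ ≤ ∑' k, S.r π x k := Summable.tsum_le_tsum hc ENNReal.summable ENNReal.summable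
  exact absurd hp.2.2 (by rw [hN]; exact lt_irrefl ⊤)

lemma le_partial {J : X → ℝ≥0∞} (hJ : ∀ z, J z = S.bellman J z)
    {π : ℕ → X → U} (hπ : S.IsPolicy π) (x : X) :
    ∀ n, J x ≤ (∑ k ∈ Finset.range n, S.stageCost π x k) + S.expect π x n J := by
  intro n
  induction n with
  | zero => simp [S.expect_zero π x J]
  | succ n ih =>
    refine le_trans ih ?_
    rw [Finset.sum_range_succ, add_assoc]
    refine add_le_add_right ?_ _
    have hstep : S.expect π x n J ≤ S.stageCost π x n + S.expect π x (n + 1) J := by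
      have h1 : S.expect π x n J
          ≤ ∑' z, S.stateDist π x n z * S.Qd 0 J z (π n z) := by
        simp only [expect_def]
        refine Summable.tsum_le_tsum (fun z => mul_le_mul_right ?_ _)
          ENNReal.summable ENNReal.summable
        rw [Qd_zero]
        calc J z = S.bellman J z := hJ z
          _ ≤ S.Q J z (π n z) := iInf₂_le _ (hπ n z)
      refine le_trans h1 ?_
      rw [S.expect_Qd_step 0 π x n J, S.stageCostPert_eq 0 π x n, zero_mul, add_zero]
    exact hstep

end SSP
namespace SSP

variable {X U W : Type*} [Countable W] (S : SSP X U W)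

lemma iInf_tsum_antitone {α : Type*} (F : ℕ → α → ℝ≥0∞)
    (hanti : ∀ a, Antitone fun n => F n a) (hfin : ∑' a, F 0 a ≠ ⊤) :
    ⨅ n, ∑' a, F n a = ∑' a, ⨅ n, F n a := by
  letI : MeasurableSpace α := ⊤
  haveI : MeasurableSingletonClass α := ⟨fun _ => MeasurableSpace.measurableSet_top⟩
  have hmeas : ∀ n, Measurable (F n) := fun n s _ => MeasurableSpace.measurableSet_top
  have hAnti : Antitone F := fun m n h a => hanti a h
  have h := MeasureTheory.lintegral_iInf hmeas hAnti
    (by rw [MeasureTheory.lintegral_count]; exact hfin)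
  rw [MeasureTheory.lintegral_count] at h
  simp only [MeasureTheory.lintegral_count] at h
  exact h.symm

lemma exists_selector (δ : ℝ≥0∞) {ε : ℝ≥0∞} (hε : ε ≠ 0) :
    ∀ z : X, ∃ u, u ∈ S.Uc z ∧ S.Qd δ (S.Jd δ) z u ≤ S.Jd δ z + ε := by
  intro z
  by_cases h : S.Jd δ z = ⊤
  · obtain ⟨u, hu⟩ := S.Uc_nonempty z
    exact ⟨u, hu, by rw [h, top_add]; exact le_top⟩
  · have hlt : (⨅ u ∈ S.Uc z, S.Qd δ (S.Jd δ) z u) < S.Jd δ z + ε :=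
      lt_of_le_of_lt (S.bellmand_le_Jd δ z) (ENNReal.lt_add_right h hε)
    rw [iInf_lt_iff] at hlt
    obtain ⟨u, hu⟩ := hlt
    rw [iInf_lt_iff] at hu
    obtain ⟨hmem, hlt2⟩ := hu
    exact ⟨u, hmem, hlt2.le⟩

lemma tsum_half_pow : (∑' k : ℕ, ((2 : ℝ≥0∞)⁻¹) ^ (k + 1)) = 1 := by
  have h : ∀ k : ℕ, ((2 : ℝ≥0∞)⁻¹) ^ (k + 1) = (2 : ℝ≥0∞)⁻¹ * ((2 : ℝ≥0∞)⁻¹) ^ k := by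
    intro k; rw [pow_succ, mul_comm]
  rw [tsum_congr h, ENNReal.tsum_mul_left, ENNReal.tsum_geometric,
    ENNReal.one_sub_inv_two, inv_inv]
  exact ENNReal.inv_mul_cancel two_ne_zero ENNReal.ofNat_ne_top

lemma exists_good_policy (δ : ℝ≥0∞) {ε : ℝ≥0∞} (hε : ε ≠ 0) :
    ∃ σ : ℕ → X → U, S.IsPolicy σ ∧ ∀ x, S.Jpert δ σ x ≤ S.Jd δ x + ε := by
  set e : ℕ → ℝ≥0∞ := fun k => ε * ((2 : ℝ≥0∞)⁻¹) ^ (k + 1) with he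
  have he0 : ∀ k, e k ≠ 0 := by
    intro k
    exact mul_ne_zero hε (pow_ne_zero _ (ENNReal.inv_ne_zero.mpr ENNReal.ofNat_ne_top))
  have hesum : (∑' k, e k) = ε := by
    rw [he, ENNReal.tsum_mul_left, tsum_half_pow, mul_one]
  have hsel : ∀ (k : ℕ) (z : X), ∃ u, u ∈ S.Uc z ∧
      S.Qd δ (S.Jd δ) z u ≤ S.Jd δ z + e k :=
    fun k z => S.exists_selector δ (he0 k) z
  choose σ hσ1 hσ2 using hsel
  refine ⟨σ, fun k z => hσ1 k z, fun x => ?_⟩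
  have key : ∀ n, (∑ k ∈ Finset.range n, S.stageCostPert δ σ x k)
      + S.expect σ x n (S.Jd δ) ≤ S.Jd δ x + ∑ k ∈ Finset.range n, e k := by
    intro n
    induction n with
    | zero => simp [S.expect_zero σ x (S.Jd δ)]
    | succ n ih =>
      have hstep : S.stageCostPert δ σ x n + S.expect σ x (n + 1) (S.Jd δ)
          ≤ S.expect σ x n (S.Jd δ) + e n := by
        rw [← S.expect_Qd_step δ σ x n (S.Jd δ)]
        calc ∑' z, S.stateDist σ x n z * S.Qd δ (S.Jd δ) z (σ n z)
            ≤ ∑' z, S.stateDist σ x n z * (S.Jd δ z + e n) :=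
              Summable.tsum_le_tsum (fun z => mul_le_mul_right (hσ2 n z) _)
                ENNReal.summable ENNReal.summable
          _ = S.expect σ x n (S.Jd δ) + e n := by
              have hh : ∀ z, S.stateDist σ x n z * (S.Jd δ z + e n)
                  = S.stateDist σ x n z * S.Jd δ z + S.stateDist σ x n z * e n :=
                fun z => mul_add _ _ _
              rw [tsum_congr hh, ENNReal.tsum_add, ENNReal.tsum_mul_right, PMF.tsum_coe,
                one_mul]
              rfl
      calc (∑ k ∈ Finset.range (n + 1), S.stageCostPert δ σ x k)
            + S.expect σ x (n + 1) (S.Jd δ)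
          = (∑ k ∈ Finset.range n, S.stageCostPert δ σ x k)
            + (S.stageCostPert δ σ x n + S.expect σ x (n + 1) (S.Jd δ)) := by
            rw [Finset.sum_range_succ, add_assoc]
        _ ≤ (∑ k ∈ Finset.range n, S.stageCostPert δ σ x k)
            + (S.expect σ x n (S.Jd δ) + e n) := add_le_add_right hstep _
        _ = ((∑ k ∈ Finset.range n, S.stageCostPert δ σ x k)
            + S.expect σ x n (S.Jd δ)) + e n := by rw [add_assoc]
        _ ≤ (S.Jd δ x + ∑ k ∈ Finset.range n, e k) + e n := add_le_add_left ih _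
        _ = S.Jd δ x + ∑ k ∈ Finset.range (n + 1), e k := by
            rw [Finset.sum_range_succ, add_assoc]
  show (∑' k, S.stageCostPert δ σ x k) ≤ S.Jd δ x + ε
  rw [ENNReal.tsum_eq_iSup_nat]
  refine iSup_le fun n => ?_
  calc (∑ k ∈ Finset.range n, S.stageCostPert δ σ x k)
      ≤ (∑ k ∈ Finset.range n, S.stageCostPert δ σ x k) + S.expect σ x n (S.Jd δ) :=
        self_le_add_right _ _
    _ ≤ S.Jd δ x + ∑ k ∈ Finset.range n, e k := key n
    _ ≤ S.Jd δ x + ε := by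
        refine add_le_add_right ?_ _
        rw [← hesum]
        exact ENNReal.sum_le_tsum _

/-- Policy playing `u` at `x` first, then following `σ`. -/
noncomputable def prepend (u : U) (x : X) (σ : ℕ → X → U) : ℕ → X → U :=
  fun k => Nat.casesOn k (fun z => if z = x then u else (S.Uc_nonempty z).some) fun k => σ k

lemma prepend_tail (u : U) (x : X) (σ : ℕ → X → U) :
    SSP.tail (S.prepend u x σ) 1 = σ := by
  funext m
  show S.prepend u x σ (1 + m) = σ m
  rw [Nat.add_comm]
  rfl

lemma prepend_zero_self (u : U) (x : X) (σ : ℕ → X → U) :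
    S.prepend u x σ 0 x = u := if_pos rfl

lemma isPolicy_prepend {u : U} {x : X} (hu : u ∈ S.Uc x) {σ : ℕ → X → U}
    (hσ : S.IsPolicy σ) : S.IsPolicy (S.prepend u x σ) := by
  intro k z
  match k with
  | 0 =>
    show (if z = x then u else (S.Uc_nonempty z).some) ∈ S.Uc z
    by_cases hz : z = x
    · subst hz; rw [if_pos rfl]; exact hu
    · rw [if_neg hz]; exact (S.Uc_nonempty z).some_mem
  | (k + 1) => exact hσ k z

lemma Jd_iInf (x : X) : ⨅ n : ℕ, S.Jd ((n + 1 : ℕ) : ℝ≥0∞)⁻¹ x = S.Jhat x := by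
  refine le_antisymm ?_ (le_iInf fun n => S.Jhat_le_Jd _ x)
  refine le_iInf₂ fun π hπ => ?_
  refine ENNReal.le_of_forall_pos_le_add fun ε hε hJfin => ?_
  have hN := hπ.2.2
  by_cases hN0 : S.N π x = 0
  · refine le_trans (iInf_le _ 0) ?_
    refine le_trans (S.Jd_le_Jpert _ hπ) ?_
    rw [Jpert_eq, hN0, mul_zero, add_zero]
    exact self_le_add_right _ _
  · have hdiv : (ε : ℝ≥0∞) / S.N π x ≠ 0 := by
      simp only [ne_eq, ENNReal.div_eq_zero_iff, not_or]
      exact ⟨ENNReal.coe_ne_zero.mpr hε.ne', hN.ne⟩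
    obtain ⟨n, hn⟩ := ENNReal.exists_inv_nat_lt hdiv
    refine le_trans (iInf_le _ n) ?_
    refine le_trans (S.Jd_le_Jpert _ hπ) ?_
    rw [Jpert_eq]
    refine add_le_add_right ?_ _
    calc ((n + 1 : ℕ) : ℝ≥0∞)⁻¹ * S.N π x
        ≤ ((n : ℕ) : ℝ≥0∞)⁻¹ * S.N π x := by
          refine mul_le_mul_left (ENNReal.inv_le_inv.mpr ?_) _
          exact_mod_cast Nat.le_succ n
      _ ≤ ((ε : ℝ≥0∞) / S.N π x) * S.N π x := mul_le_mul_left hn.le _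
      _ = (ε : ℝ≥0∞) := ENNReal.div_mul_cancel hN0 hN.ne

end SSP
namespace SSP

variable {X U W : Type*} [Countable W] (S : SSP X U W)

lemma Jhat_le_bellman {b : ℝ≥0∞} (hbtop : b < ⊤) (hbg : ∀ x u w, S.g x u w ≤ b)
    {pb : ℕ → X → U} (hpb : S.IsPolicy pb) (hCtop : (⨆ y ∈ S.Xhat, S.N pb y) < ⊤)
    (x : X) : S.Jhat x ≤ S.bellman S.Jhat x := by
  set C := ⨆ y ∈ S.Xhat, S.N pb y with hCdef
  have hC : ∀ y ∈ S.Xhat, S.N pb y ≤ C := fun y hy => le_iSup₂ (f := fun y _ => S.N pb y) y hy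
  have hpbp : ∀ y ∈ S.Xhat, S.ProperAt pb y := by
    intro y hy
    have h1 : S.N pb y < ⊤ := lt_of_le_of_lt (hC y hy) hCtop
    have h2 : S.Jcost pb y < ⊤ :=
      lt_of_le_of_lt (S.Jcost_le_N hbg hpb y) (ENNReal.mul_lt_top hbtop h1)
    exact ⟨hpb, h2, h1⟩
  have hJdb : ∀ (δ : ℝ≥0∞), ∀ y ∈ S.Xhat, S.Jd δ y ≤ b * C + δ * C := by
    intro δ y hy
    refine le_trans (S.Jd_le_Jpert δ (hpbp y hy)) ?_
    rw [Jpert_eq]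
    exact add_le_add (le_trans (S.Jcost_le_N hbg hpb y) (mul_le_mul_right (hC y hy) b))
      (mul_le_mul_right (hC y hy) δ)
  show S.Jhat x ≤ ⨅ u ∈ S.Uc x, S.Q S.Jhat x u
  refine le_iInf₂ fun u hu => ?_
  by_cases hQ : S.Q S.Jhat x u = ⊤
  · rw [hQ]; exact le_top
  have hsucc : ∀ w, S.P x u w ≠ 0 → S.f x u w ∈ S.Xhat := by
    intro w hw
    show S.Jhat (S.f x u w) < ⊤
    refine aux_fin hw ?_ (lt_top_iff_ne_top.mpr hQ)
    calc S.P x u w * S.Jhat (S.f x u w)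
        ≤ S.P x u w * (S.g x u w + S.Jhat (S.f x u w)) := mul_le_mul_right le_add_self _
      _ ≤ S.Q S.Jhat x u := ENNReal.le_tsum w
  have key : ∀ n : ℕ, S.Jhat x
      ≤ ∑' w, S.P x u w * (S.g x u w + S.Jd ((n + 1 : ℕ) : ℝ≥0∞)⁻¹ (S.f x u w)) := by
    intro n
    set δ : ℝ≥0∞ := ((n + 1 : ℕ) : ℝ≥0∞)⁻¹ with hδdef
    have hδ0 : δ ≠ 0 := ENNReal.inv_ne_zero.mpr (ENNReal.natCast_ne_top _)
    have hδtop : δ ≠ ⊤ := ENNReal.inv_ne_top.mpr (by exact_mod_cast Nat.succ_ne_zero n)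
    refine ENNReal.le_of_forall_pos_le_add fun ε hε _ => ?_
    have hεne : (ε : ℝ≥0∞) ≠ 0 := ENNReal.coe_ne_zero.mpr hε.ne'
    obtain ⟨σ, hσpol, hσ⟩ := S.exists_good_policy δ hεne
    set τ := S.prepend u x σ with hτdef
    have hτpol : S.IsPolicy τ := S.isPolicy_prepend hu hσpol
    have htail : SSP.tail τ 1 = σ := S.prepend_tail u x σ
    have hτ0 : τ 0 x = u := S.prepend_zero_self u x σ
    have hKfin : b * C + δ * C + (ε : ℝ≥0∞) ≠ ⊤ := by
      rw [ENNReal.add_ne_top, ENNReal.add_ne_top]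
      exact ⟨⟨ENNReal.mul_ne_top hbtop.ne hCtop.ne, ENNReal.mul_ne_top hδtop hCtop.ne⟩,
        ENNReal.coe_ne_top⟩
    have hσcost : ∀ y, S.Jcost σ y ≤ S.Jd δ y + ε := by
      intro y
      refine le_trans ?_ (hσ y)
      rw [Jpert_eq]
      exact self_le_add_right _ _
    set D := (b * C + δ * C + (ε : ℝ≥0∞)) / δ with hD
    have hDfin : D ≠ ⊤ := (ENNReal.div_lt_top hKfin hδ0).ne
    have hσN : ∀ y ∈ S.Xhat, S.N σ y ≤ D := by
      intro y hy
      rw [hD, ENNReal.le_div_iff_mul_le (Or.inl hδ0) (Or.inl hδtop)]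
      calc S.N σ y * δ = δ * S.N σ y := mul_comm _ _
        _ ≤ S.Jpert δ σ y := by rw [Jpert_eq]; exact le_add_self
        _ ≤ S.Jd δ y + ε := hσ y
        _ ≤ b * C + δ * C + ε := add_le_add_left (hJdb δ y hy) _
    have hτN : S.N τ x < ⊤ := by
      rw [S.N_front τ x, htail, hτ0]
      have h1 : S.r τ x 0 ≤ 1 := by
        rw [r_zero]; split <;> simp
      have h2 : (∑' w, S.P x u w * S.N σ (S.f x u w)) ≤ D := by
        calc ∑' w, S.P x u w * S.N σ (S.f x u w)
            ≤ ∑' w, S.P x u w * D := by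
              refine Summable.tsum_le_tsum (fun w => ?_) ENNReal.summable ENNReal.summable
              by_cases hw : S.P x u w = 0
              · rw [hw, zero_mul, zero_mul]
              · exact mul_le_mul_right (hσN _ (hsucc w hw)) _
          _ = D := by rw [ENNReal.tsum_mul_right, PMF.tsum_coe, one_mul]
      refine lt_of_le_of_lt (add_le_add h1 h2) ?_
      exact ENNReal.add_lt_top.mpr ⟨ENNReal.one_lt_top, lt_top_iff_ne_top.mpr hDfin⟩
    have hτJ : S.Jcost τ x
        ≤ (∑' w, S.P x u w * (S.g x u w + S.Jd δ (S.f x u w))) + ε := by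
      rw [S.Jcost_front τ x, htail, S.stageCost_zero τ x, hτ0]
      calc (∑' w, S.P x u w * S.g x u w) + ∑' w, S.P x u w * S.Jcost σ (S.f x u w)
          ≤ (∑' w, S.P x u w * S.g x u w)
            + ∑' w, S.P x u w * (S.Jd δ (S.f x u w) + ε) := by
            refine add_le_add_right ?_ _
            exact Summable.tsum_le_tsum (fun w => mul_le_mul_right (hσcost _) _)
              ENNReal.summable ENNReal.summable
        _ = (∑' w, S.P x u w * S.g x u w)
            + ((∑' w, S.P x u w * S.Jd δ (S.f x u w)) + ε) := by
            congr 1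
            rw [tsum_congr (fun w => mul_add (S.P x u w) _ _), ENNReal.tsum_add,
              ENNReal.tsum_mul_right, PMF.tsum_coe, one_mul]
        _ = (∑' w, S.P x u w * (S.g x u w + S.Jd δ (S.f x u w))) + ε := by
            rw [← add_assoc, ← ENNReal.tsum_add]
            congr 1
            exact tsum_congr fun w => (mul_add _ _ _).symm
    have hsum_fin : (∑' w, S.P x u w * (S.g x u w + S.Jd δ (S.f x u w)))
        ≤ b + (b * C + δ * C) := by
      calc ∑' w, S.P x u w * (S.g x u w + S.Jd δ (S.f x u w))
          ≤ ∑' w, S.P x u w * (b + (b * C + δ * C)) := by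
            refine Summable.tsum_le_tsum (fun w => ?_) ENNReal.summable ENNReal.summable
            by_cases hw : S.P x u w = 0
            · rw [hw, zero_mul, zero_mul]
            · exact mul_le_mul_right (add_le_add (hbg x u w) (hJdb δ _ (hsucc w hw))) _
        _ = b + (b * C + δ * C) := by rw [ENNReal.tsum_mul_right, PMF.tsum_coe, one_mul]
    have hτJfin : S.Jcost τ x < ⊤ := by
      refine lt_of_le_of_lt (le_trans hτJ (add_le_add_left hsum_fin _)) ?_
      rw [lt_top_iff_ne_top, ENNReal.add_ne_top, ENNReal.add_ne_top]
      refine ⟨⟨hbtop.ne, ?_⟩, ENNReal.coe_ne_top⟩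
      rw [ENNReal.add_ne_top]
      exact ⟨ENNReal.mul_ne_top hbtop.ne hCtop.ne, ENNReal.mul_ne_top hδtop hCtop.ne⟩
    have hτprop : S.ProperAt τ x := ⟨hτpol, hτJfin, hτN⟩
    exact le_trans (S.Jhat_le_Jcost hτprop) hτJ
  have hanti : ∀ w : W, Antitone fun n : ℕ =>
      S.P x u w * (S.g x u w + S.Jd ((n + 1 : ℕ) : ℝ≥0∞)⁻¹ (S.f x u w)) := by
    intro w m n hmn
    refine mul_le_mul_right (add_le_add_right ?_ _) _
    refine S.Jd_mono ?_ _
    refine ENNReal.inv_le_inv.mpr ?_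
    exact_mod_cast Nat.succ_le_succ hmn
  have hone : ((0 + 1 : ℕ) : ℝ≥0∞)⁻¹ ≤ 1 := by norm_num
  have hfin0 : (∑' w, S.P x u w
      * (S.g x u w + S.Jd ((0 + 1 : ℕ) : ℝ≥0∞)⁻¹ (S.f x u w))) ≠ ⊤ := by
    have hb1 : (∑' w, S.P x u w * (S.g x u w + S.Jd ((0 + 1 : ℕ) : ℝ≥0∞)⁻¹ (S.f x u w)))
        ≤ b + (b * C + 1 * C) := by
      calc ∑' w, S.P x u w * (S.g x u w + S.Jd ((0 + 1 : ℕ) : ℝ≥0∞)⁻¹ (S.f x u w))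
          ≤ ∑' w, S.P x u w * (b + (b * C + 1 * C)) := by
            refine Summable.tsum_le_tsum (fun w => ?_) ENNReal.summable ENNReal.summable
            by_cases hw : S.P x u w = 0
            · rw [hw, zero_mul, zero_mul]
            · refine mul_le_mul_right (add_le_add (hbg x u w) ?_) _
              refine le_trans (hJdb _ _ (hsucc w hw)) ?_
              exact add_le_add_right (mul_le_mul_left hone _) _
        _ = b + (b * C + 1 * C) := by rw [ENNReal.tsum_mul_right, PMF.tsum_coe, one_mul]
    refine ne_top_of_le_ne_top ?_ hb1
    rw [ENNReal.add_ne_top, ENNReal.add_ne_top]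
    exact ⟨hbtop.ne, ENNReal.mul_ne_top hbtop.ne hCtop.ne,
      ENNReal.mul_ne_top ENNReal.one_ne_top hCtop.ne⟩
  calc S.Jhat x
      ≤ ⨅ n : ℕ, ∑' w, S.P x u w
          * (S.g x u w + S.Jd ((n + 1 : ℕ) : ℝ≥0∞)⁻¹ (S.f x u w)) := le_iInf key
    _ = ∑' w, ⨅ n : ℕ, S.P x u w
          * (S.g x u w + S.Jd ((n + 1 : ℕ) : ℝ≥0∞)⁻¹ (S.f x u w)) :=
        iInf_tsum_antitone _ hanti hfin0
    _ = ∑' w, S.P x u w * (S.g x u w + S.Jhat (S.f x u w)) := by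
        refine tsum_congr fun w => ?_
        by_cases hw : S.P x u w = 0
        · simp [hw]
        · rw [← ENNReal.mul_iInf_of_ne hw ((S.P x u).apply_ne_top w), ← ENNReal.add_iInf,
            S.Jd_iInf]
    _ = S.Q S.Jhat x u := rfl

end SSP
/-- If `g` is bounded over `X×U×W` and there exists a uniformly proper
policy, then `Ĵ` is the largest solution of Bellman's equation within `B`. -/
theorem Jhat_largest_in_Bset {X U W : Type*} [Countable W] (S : SSP X U W)
    (hb : S.BoundedCost) (hup : ∃ π : ℕ → X → U, S.UniformlyProper π) :
    S.Jhat ∈ S.Bset ∧ (∀ x, S.Jhat x = S.bellman S.Jhat x) ∧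
    ∀ J ∈ S.Bset, (∀ x, J x = S.bellman J x) → J ≤ S.Jhat := by
  obtain ⟨b, hbtop, hbg⟩ := hb
  obtain ⟨pb, hpb, hCtop⟩ := hup
  set C := ⨆ y ∈ S.Xhat, S.N pb y with hCdef
  have hC : ∀ y ∈ S.Xhat, S.N pb y ≤ C := fun y hy => le_iSup₂ (f := fun y _ => S.N pb y) y hy
  have hpbp : ∀ y ∈ S.Xhat, S.ProperAt pb y := by
    intro y hy
    have h1 : S.N pb y < ⊤ := lt_of_le_of_lt (hC y hy) hCtop
    have h2 : S.Jcost pb y < ⊤ :=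
      lt_of_le_of_lt (S.Jcost_le_N hbg hpb y) (ENNReal.mul_lt_top hbtop h1)
    exact ⟨hpb, h2, h1⟩
  refine ⟨⟨S.Jhat_t hpb, ?_⟩, ?_, ?_⟩
  · have hle : (⨆ x ∈ S.Xhat, S.Jhat x) ≤ b * C := by
      refine iSup₂_le fun x hx => ?_
      refine le_trans (S.Jhat_le_Jcost (hpbp x hx)) ?_
      exact le_trans (S.Jcost_le_N hbg hpb x) (mul_le_mul_right (hC x hx) b)
    exact lt_of_le_of_lt hle (ENNReal.mul_lt_top hbtop hCtop)
  · exact fun x => le_antisymm (S.Jhat_le_bellman hbtop hbg hpb hCtop x)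
      (S.bellman_le_Jhat x)
  · intro J hJB hJbell
    intro x
    refine le_iInf₂ fun π hπ => ?_
    obtain ⟨hJt, hJbd⟩ := hJB
    set M := ⨆ z ∈ S.Xhat, J z with hM
    have hMfin : M ≠ ⊤ := hJbd.ne
    have hMle : ∀ z ∈ S.Xhat, J z ≤ M := fun z hz => le_iSup₂ (f := fun z _ => J z) z hz
    refine ENNReal.le_of_forall_pos_le_add fun ε hε hJc => ?_
    have hr0 : ⨅ n, S.r π x n = 0 := S.r_iInf_zero hπ
    obtain ⟨n, hn⟩ : ∃ n, M * S.r π x n ≤ (ε : ℝ≥0∞) := by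
      by_cases hM0 : M = 0
      · exact ⟨0, by rw [hM0, zero_mul]; exact zero_le'⟩
      · have hdiv : (ε : ℝ≥0∞) / M ≠ 0 := by
          simp only [ne_eq, ENNReal.div_eq_zero_iff, not_or]
          exact ⟨ENNReal.coe_ne_zero.mpr hε.ne', hMfin⟩
        have hlt : (⨅ n, S.r π x n) < (ε : ℝ≥0∞) / M := by
          rw [hr0]; exact pos_iff_ne_zero.mpr hdiv
        rw [iInf_lt_iff] at hlt
        obtain ⟨n, hn⟩ := hlt
        refine ⟨n, ?_⟩
        calc M * S.r π x n ≤ M * ((ε : ℝ≥0∞) / M) := mul_le_mul_right hn.le _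
          _ = (ε : ℝ≥0∞) := ENNReal.mul_div_cancel' (fun h => absurd h hM0) (fun h => absurd h hMfin)
    calc J x ≤ (∑ k ∈ Finset.range n, S.stageCost π x k) + S.expect π x n J :=
          S.le_partial hJbell hπ.1 x n
      _ ≤ S.Jcost π x + M * S.r π x n :=
          add_le_add (ENNReal.sum_le_tsum _) (S.expect_le_r hJt hMle hπ n)
      _ ≤ S.Jcost π x + ε := add_le_add_right hn _
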